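/- Let 0 < q < 1, 0 < μ < 1, ν ≤ μ, and let k be a positive integer with μ < q^k. If X is a random variable on ℤ_{≥0} with distribution φ_{q,μ,ν}(·|∞), i.e. P(X = ℓ) = μ^ℓ ((ν/μ;q)_ℓ / (q;q)_ℓ) ((μ;q)_∞/(ν;q)_∞), then E[q^{−kX}] = (ν/q; q^{−1})_k / (μ/q; q^{−1})_k, i.e. ∑_{ℓ≥0} q^{−kℓ} φ_{q,μ,ν}(ℓ|∞) = (ν q^{−k};q)_k / (μ q^{−k};q)_k, with the series converging since μ q^{−k} < 1. -/

import Mathlib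

open Filter Topology MeasureTheory

/-- Finite q-Pochhammer symbol `(a;q)_n`. -/
noncomputable def qPoch (a q : ℝ) (n : ℕ) : ℝ := ∏ i ∈ Finset.range n, (1 - a * q ^ i)

/-- Infinite q-Pochhammer symbol `(a;q)_∞`. -/
noncomputable def qPochInf (a q : ℝ) : ℝ := ∏' i : ℕ, (1 - a * q ^ i)

/-- The q-beta-binomial weight `φ_{q,μ,ν}(s|y)`. -/
noncomputable def phiW (q μ ν : ℝ) (s y : ℕ) : ℝ :=
  μ ^ s * (qPoch (ν / μ) q s * qPoch μ q (y - s) / qPoch ν q y) *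
    (qPoch q q y / (qPoch q q s * qPoch q q (y - s)))

/-- The weight `φ_{q,μ,ν}(s|∞)`. -/
noncomputable def phiInfW (q μ ν : ℝ) (s : ℕ) : ℝ :=
  μ ^ s * (qPoch (ν / μ) q s / qPoch q q s) * (qPochInf μ q / qPochInf ν q)

/-- The q-hypergeometric weight `ψ_{q,a,b,c}(p)`. -/
noncomputable def psiW (q a b c : ℝ) (p : ℕ) : ℝ :=
  (c / (a * b)) ^ p * (qPoch a q p * qPoch b q p / (qPoch q q p * qPoch c q p)) *
    (qPochInf c q * qPochInf (c / (a * b)) q / (qPochInf (c / a) q * qPochInf (c / b) q))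

/-- The q-Hahn PushTASEP update probability `P_{ℓ,g}(L)`. -/
noncomputable def Phahn (q μ ν : ℝ) (ℓ g L : ℕ) : ℝ :=
  ∑ p ∈ Finset.range (min ℓ L + 1),
    phiW q⁻¹ (q ^ g) (μ * ν * q ^ ((g : ℤ) - 1)) p ℓ *
      psiW q (ν * μ⁻¹ * q ^ p) (ν * q ^ g) (ν ^ 2 * q ^ (g + p)) (L - p)

section helpers
variable {q a z x : ℝ}

lemma qPoch_zero : qPoch a q 0 = 1 := by simp [qPoch]

lemma qPoch_succ (n : ℕ) : qPoch a q (n+1) = qPoch a q n * (1 - a * q ^ n) :=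
  Finset.prod_range_succ _ _

lemma fact_pos (hq0 : 0 < q) (hq1 : q < 1) (hx : x < 1) (i : ℕ) : 0 < 1 - x * q ^ i := by
  rcases le_or_gt x 0 with h | h
  · nlinarith [pow_pos hq0 i]
  · nlinarith [pow_le_one₀ hq0.le hq1.le (n := i), pow_pos hq0 i]

lemma qq_pos (hq0 : 0 < q) (hq1 : q < 1) (n : ℕ) : 0 < qPoch q q n :=
  Finset.prod_pos fun i _ => fact_pos hq0 hq1 hq1 i

lemma geom_sum_le_inv (hq0 : 0 < q) (hq1 : q < 1) (n : ℕ) :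
    ∑ i ∈ Finset.range n, q ^ i ≤ (1 - q)⁻¹ := by
  have h2 : (0:ℝ) < 1 - q := by linarith
  have hp : 0 < q ^ n := pow_pos hq0 n
  rw [geom_sum_eq hq1.ne]
  calc (q ^ n - 1) / (q - 1) = (1 - q ^ n) / (1 - q) := by
        rw [div_eq_div_iff (by linarith) (by linarith)]; ring
    _ ≤ 1 / (1 - q) := by apply div_le_div_of_nonneg_right (by linarith : (1:ℝ) - q ^ n ≤ 1) h2.le
    _ = (1 - q)⁻¹ := one_div _

lemma abs_qPoch_le (hq0 : 0 < q) (hq1 : q < 1) (n : ℕ) :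
    |qPoch a q n| ≤ Real.exp (|a| * (1 - q)⁻¹) := by
  have h1 : |qPoch a q n| ≤ ∏ i ∈ Finset.range n, Real.exp (|a| * q ^ i) := by
    rw [qPoch, Finset.abs_prod]
    refine Finset.prod_le_prod (fun i _ => abs_nonneg _) fun i _ => ?_
    have h2 : |1 - a * q ^ i| ≤ 1 + |a| * q ^ i := by
      calc |1 - a * q ^ i| ≤ |(1:ℝ)| + |a * q^i| := abs_sub _ _
        _ = 1 + |a| * q ^ i := by rw [abs_one, abs_mul, abs_pow, abs_of_pos hq0]
    refine h2.trans ?_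
    have := Real.add_one_le_exp (|a| * q ^ i)
    linarith
  rw [← Real.exp_sum] at h1
  refine h1.trans (Real.exp_le_exp.mpr ?_)
  rw [← Finset.mul_sum]
  have := geom_sum_le_inv hq0 hq1 n
  have ha : 0 ≤ |a| := abs_nonneg _
  nlinarith

lemma one_sub_ge_exp (hq0 : 0 < q) (hq1 : q < 1) (hx0 : 0 ≤ x) (hx : x ≤ q) :
    Real.exp (-(x * (1 - q)⁻¹)) ≤ 1 - x := by
  have h1 : 0 < 1 - x := by linarith
  have h2 : 0 < 1 - q := by linarith
  have expand : (1 + x * (1-q)⁻¹) * (1-x) = 1 + x * (1-q)⁻¹ * (q-x) := by field_simp; ring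
  have hnn : 0 ≤ x * (1-q)⁻¹ * (q-x) :=
    mul_nonneg (mul_nonneg hx0 (inv_nonneg.mpr h2.le)) (by linarith)
  have key : (1-x)⁻¹ ≤ Real.exp (x * (1-q)⁻¹) := by
    have h3 : (1-x)⁻¹ ≤ 1 + x * (1-q)⁻¹ := by
      have hgt : (1:ℝ) ≤ (1 + x * (1-q)⁻¹) * (1-x) := by linarith
      calc (1-x)⁻¹ = (1-x)⁻¹ * 1 := by ring
        _ ≤ (1-x)⁻¹ * ((1 + x * (1-q)⁻¹) * (1-x)) := by
            exact mul_le_mul_of_nonneg_left hgt (inv_nonneg.mpr h1.le)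
        _ = 1 + x * (1-q)⁻¹ := by field_simp
    linarith [Real.add_one_le_exp (x * (1-q)⁻¹)]
  have hE := Real.exp_pos (x * (1-q)⁻¹)
  have c1 : Real.exp (x * (1-q)⁻¹) * (Real.exp (x * (1-q)⁻¹))⁻¹ = 1 := mul_inv_cancel₀ hE.ne'
  have c2 : (1-x) * (1-x)⁻¹ = 1 := mul_inv_cancel₀ h1.ne'
  rw [Real.exp_neg]
  nlinarith [key, c1, c2, mul_pos (inv_pos.mpr hE) h1, inv_pos.mpr hE, inv_pos.mpr h1]


lemma log_bound (hq0 : 0 < q) (hq1 : q < 1) (hx : x < 1) (i : ℕ) :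
    ‖Real.log (1 - x * q ^ i)‖ ≤ (|x| * (1 - max x 0)⁻¹) * q ^ i := by
  have hpos := fact_pos hq0 hq1 hx i
  have hqi0 : 0 < q ^ i := pow_pos hq0 i
  have hqi1 : q ^ i ≤ 1 := pow_le_one₀ hq0.le hq1.le
  rw [Real.norm_eq_abs]
  rcases le_or_gt x 0 with h | h
  · have h1 : (1:ℝ) ≤ 1 - x * q ^ i := by nlinarith
    rw [abs_of_nonneg (Real.log_nonneg h1), abs_of_nonpos h, max_eq_right h]
    have h2 := Real.log_le_sub_one_of_pos hpos
    simp only [sub_zero, inv_one, mul_one]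
    nlinarith
  · have hmax : max x 0 = x := max_eq_left h.le
    have h1x : 0 < 1 - x := by linarith
    have hyx : 1 - x ≤ 1 - x * q ^ i := by nlinarith
    have hlog : Real.log (1 - x * q ^ i) ≤ 0 := by
      apply Real.log_nonpos (by nlinarith) (by nlinarith)
    rw [abs_of_nonpos hlog, hmax]
    have h2 : -Real.log (1 - x * q ^ i) = Real.log (1 - x * q ^ i)⁻¹ := (Real.log_inv _).symm
    rw [h2]
    have h3 := Real.log_le_sub_one_of_pos (inv_pos.mpr hpos)
    have h4 : (1 - x * q ^ i)⁻¹ ≤ (1 - x)⁻¹ := by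
      exact inv_anti₀ h1x hyx
    have h5 : (1 - x * q ^ i)⁻¹ - 1 = x * q ^ i * (1 - x * q ^ i)⁻¹ := by
      field_simp
      ring
    rw [abs_of_pos h]
    calc Real.log (1 - x * q ^ i)⁻¹ ≤ (1 - x * q ^ i)⁻¹ - 1 := h3
      _ = x * q ^ i * (1 - x * q ^ i)⁻¹ := h5
      _ ≤ x * q ^ i * (1 - x)⁻¹ := by
          apply mul_le_mul_of_nonneg_left h4 (by positivity)
      _ = x * (1 - x)⁻¹ * q ^ i := by ring

lemma summable_log (hq0 : 0 < q) (hq1 : q < 1) (hx : x < 1) :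
    Summable (fun i : ℕ => Real.log (1 - x * q ^ i)) := by
  refine Summable.of_norm_bounded (((summable_geometric_of_lt_one hq0.le hq1)).mul_left
    (|x| * (1 - max x 0)⁻¹)) (log_bound hq0 hq1 hx)

lemma hasProd_one_sub (hq0 : 0 < q) (hq1 : q < 1) (hx : x < 1) :
    HasProd (fun i : ℕ => 1 - x * q ^ i)
      (Real.exp (∑' i : ℕ, Real.log (1 - x * q ^ i))) := by
  have h := (summable_log hq0 hq1 hx).hasSum.rexp
  have he : (Real.exp ∘ fun i : ℕ => Real.log (1 - x * q ^ i)) = fun i : ℕ => 1 - x * q ^ i := by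
    funext i; exact Real.exp_log (fact_pos hq0 hq1 hx i)
  rwa [he] at h

lemma multipliable_one_sub (hq0 : 0 < q) (hq1 : q < 1) (hx : x < 1) :
    Multipliable (fun i : ℕ => 1 - x * q ^ i) := ⟨_, hasProd_one_sub hq0 hq1 hx⟩

lemma qPochInf_pos (hq0 : 0 < q) (hq1 : q < 1) (hx : x < 1) : 0 < qPochInf x q := by
  rw [qPochInf, (hasProd_one_sub hq0 hq1 hx).tprod_eq]
  exact Real.exp_pos _

lemma tendsto_qPoch (hq0 : 0 < q) (hq1 : q < 1) (hx : x < 1) :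
    Tendsto (fun n => qPoch x q n) atTop (𝓝 (qPochInf x q)) := by
  have := ((multipliable_one_sub hq0 hq1 hx).hasProd).tendsto_prod_nat
  rw [qPochInf, ← (multipliable_one_sub hq0 hq1 hx).hasProd.tprod_eq] at *
  exact this

lemma qq_lower (hq0 : 0 < q) (hq1 : q < 1) (n : ℕ) :
    Real.exp (-(q * (1-q)⁻¹ * (1-q)⁻¹)) ≤ qPoch q q n := by
  have h1 : ∏ i ∈ Finset.range n, Real.exp (-(q * q ^ i * (1-q)⁻¹)) ≤ qPoch q q n := by
    rw [qPoch]
    refine Finset.prod_le_prod (fun i _ => (Real.exp_pos _).le) fun i _ => ?_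
    exact one_sub_ge_exp hq0 hq1 (mul_nonneg hq0.le (pow_pos hq0 i).le)
      (by nlinarith [pow_le_one₀ hq0.le hq1.le (n := i), pow_pos hq0 i])
  rw [← Real.exp_sum] at h1
  refine le_trans (Real.exp_le_exp.mpr ?_) h1
  have hg := geom_sum_le_inv hq0 hq1 (q := q) n
  have hinv : (0:ℝ) ≤ (1-q)⁻¹ := inv_nonneg.mpr (by linarith)
  have : ∑ i ∈ Finset.range n, -(q * q ^ i * (1-q)⁻¹)
      = -(q * (1-q)⁻¹ * ∑ i ∈ Finset.range n, q ^ i) := by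
    rw [Finset.mul_sum, ← Finset.sum_neg_distrib]
    exact Finset.sum_congr rfl fun i _ => by ring
  rw [this]
  have nonneg : (0:ℝ) ≤ q * (1-q)⁻¹ := mul_nonneg hq0.le hinv
  linarith [mul_le_mul_of_nonneg_left hg nonneg]


noncomputable def cc (a q : ℝ) (n : ℕ) : ℝ := qPoch a q n / qPoch q q n

noncomputable def FF (a q z : ℝ) : ℝ := ∑' n : ℕ, cc a q n * z ^ n

noncomputable def Cbound (a q : ℝ) : ℝ :=
  Real.exp (|a| * (1-q)⁻¹) * Real.exp (q * (1-q)⁻¹ * (1-q)⁻¹)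

lemma Cbound_pos : 0 < Cbound a q := mul_pos (Real.exp_pos _) (Real.exp_pos _)

lemma cc_zero : cc a q 0 = 1 := by simp [cc, qPoch_zero]

lemma abs_cc_le (hq0 : 0 < q) (hq1 : q < 1) (n : ℕ) : |cc a q n| ≤ Cbound a q := by
  rw [cc, abs_div, abs_of_pos (qq_pos hq0 hq1 n), Cbound]
  calc |qPoch a q n| / qPoch q q n
      ≤ Real.exp (|a| * (1-q)⁻¹) / Real.exp (-(q * (1-q)⁻¹ * (1-q)⁻¹)) := by
        apply div_le_div₀ (Real.exp_pos _).le (abs_qPoch_le hq0 hq1 n) (Real.exp_pos _)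
          (qq_lower hq0 hq1 n)
    _ = Real.exp (|a| * (1-q)⁻¹) * Real.exp (q * (1-q)⁻¹ * (1-q)⁻¹) := by
        rw [Real.exp_neg, div_eq_mul_inv, inv_inv]

lemma summable_cc (hq0 : 0 < q) (hq1 : q < 1) (hz : |z| < 1) :
    Summable fun n : ℕ => cc a q n * z ^ n := by
  refine Summable.of_norm_bounded
    ((summable_geometric_of_lt_one (abs_nonneg z) hz).mul_left (Cbound a q)) fun n => ?_
  rw [norm_mul, norm_pow, Real.norm_eq_abs, Real.norm_eq_abs]
  exact mul_le_mul_of_nonneg_right (abs_cc_le hq0 hq1 n) (by positivity)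

lemma cc_rec (hq0 : 0 < q) (hq1 : q < 1) (n : ℕ) :
    cc a q (n+1) * (1 - q * q ^ n) = cc a q n * (1 - a * q ^ n) := by
  have h1 := qq_pos hq0 hq1 n
  have h2 := qq_pos hq0 hq1 (n+1)
  have h3 : qPoch q q (n+1) = qPoch q q n * (1 - q * q ^ n) := qPoch_succ n
  have h4 : (1 - q * q ^ n) ≠ 0 := by
    have := fact_pos (x := q) hq0 hq1 hq1 n
    rw [← pow_succ'] at this ⊢
    exact this.ne'
  rw [cc, cc, qPoch_succ, h3]
  rw [div_mul_eq_mul_div, div_mul_eq_mul_div, div_eq_div_iff (mul_ne_zero h1.ne' h4) h1.ne']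
  ring

lemma funeq (hq0 : 0 < q) (hq1 : q < 1) (hz : |z| < 1) :
    (1 - z) * FF a q z = (1 - a * z) * FF a q (q * z) := by
  have hqz : |q * z| < 1 := by
    rw [abs_mul, abs_of_pos hq0]
    nlinarith [abs_nonneg z]
  have S1 : Summable fun n : ℕ => cc a q n * z ^ n := summable_cc hq0 hq1 hz
  have S2 : Summable fun n : ℕ => cc a q n * (q * z) ^ n := summable_cc hq0 hq1 hqz
  have key : FF a q z - FF a q (q * z) = z * FF a q z - a * z * FF a q (q * z) := by
    have e1 : FF a q z - FF a q (q * z) = ∑' n : ℕ, (cc a q n * z ^ n - cc a q n * (q*z) ^ n) :=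
      (Summable.tsum_sub S1 S2).symm
    have e2 : ∀ n : ℕ, cc a q n * z ^ n - cc a q n * (q*z) ^ n
        = cc a q n * (1 - q ^ n) * z ^ n := by
      intro n; rw [mul_pow]; ring
    rw [e1]
    have S3 : Summable fun n : ℕ => cc a q n * (1 - q ^ n) * z ^ n := by
      have := S1.sub S2
      refine this.congr fun n => ?_
      rw [mul_pow]; ring
    have e3 : ∑' n : ℕ, (cc a q n * z ^ n - cc a q n * (q*z) ^ n)
        = ∑' n : ℕ, cc a q n * (1 - q ^ n) * z ^ n := tsum_congr e2
    rw [e3]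
    have e4 : ∑' n : ℕ, cc a q n * (1 - q ^ n) * z ^ n
        = ∑' n : ℕ, cc a q (n+1) * (1 - q ^ (n+1)) * z ^ (n+1) := by
      rw [Summable.tsum_eq_zero_add S3]
      simp
    have e5 : ∀ n : ℕ, cc a q (n+1) * (1 - q ^ (n+1)) * z ^ (n+1)
        = cc a q n * (1 - a * q ^ n) * z ^ (n+1) := by
      intro n
      have := cc_rec (a := a) hq0 hq1 n
      rw [pow_succ']
      rw [show cc a q (n+1) * (1 - q * q ^ n) * z ^ (n+1)
        = (cc a q (n+1) * (1 - q * q ^ n)) * z ^ (n+1) by ring, this]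
    rw [e4, tsum_congr e5]
    have S4 : Summable fun n : ℕ => z * (cc a q n * z ^ n) := S1.mul_left z
    have S5 : Summable fun n : ℕ => a * z * (cc a q n * (q*z) ^ n) := S2.mul_left (a*z)
    have e6 : ∀ n : ℕ, cc a q n * (1 - a * q ^ n) * z ^ (n+1)
        = z * (cc a q n * z ^ n) - a * z * (cc a q n * (q*z) ^ n) := by
      intro n; rw [mul_pow]; ring
    rw [tsum_congr e6, Summable.tsum_sub S4 S5, tsum_mul_left, tsum_mul_left]
    rfl
  linear_combination key

lemma iterate_eq (hq0 : 0 < q) (hq1 : q < 1) (hz : |z| < 1) (n : ℕ) :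
    FF a q z * qPoch z q n = qPoch (a * z) q n * FF a q (q ^ n * z) := by
  induction n with
  | zero => simp [qPoch_zero]
  | succ m ih =>
    have habs : |q ^ m * z| < 1 := by
      rw [abs_mul, abs_pow, abs_of_pos hq0]
      nlinarith [abs_nonneg z, pow_le_one₀ hq0.le hq1.le (n := m), pow_pos hq0 m,
        abs_lt.mp hz]
    have step := funeq (a := a) hq0 hq1 habs
    rw [qPoch_succ, qPoch_succ]
    have : q * (q ^ m * z) = q ^ (m+1) * z := by ring
    rw [this] at step
    calc FF a q z * (qPoch z q m * (1 - z * q ^ m))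
        = (FF a q z * qPoch z q m) * (1 - q ^ m * z) := by ring_nf
      _ = qPoch (a*z) q m * (FF a q (q ^ m * z) * (1 - q ^ m * z)) := by rw [ih]; ring
      _ = qPoch (a*z) q m * ((1 - a * (q ^ m * z)) * FF a q (q ^ (m+1) * z)) := by
          rw [show FF a q (q ^ m * z) * (1 - q ^ m * z)
            = (1 - q ^ m * z) * FF a q (q ^ m * z) by ring, step]
      _ = qPoch (a*z) q m * (1 - a * z * q ^ m) * FF a q (q ^ (m+1) * z) := by ring


lemma FF_tendsto_one (hq0 : 0 < q) (hq1 : q < 1) (hz : |z| < 1) :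
    Tendsto (fun n : ℕ => FF a q (q ^ n * z)) atTop (𝓝 1) := by
  have bound : ∀ n : ℕ, ‖FF a q (q ^ n * z) - 1‖
      ≤ (Cbound a q * (1 - |z|)⁻¹ * |z|) * q ^ n := by
    intro n
    have hqn1 : q ^ n ≤ 1 := pow_le_one₀ hq0.le hq1.le
    have hqn0 : 0 < q ^ n := pow_pos hq0 n
    have hwz : |q ^ n * z| ≤ |z| := by
      rw [abs_mul, abs_pow, abs_of_pos hq0]
      nlinarith [abs_nonneg z]
    have hwlt : |q ^ n * z| < 1 := lt_of_le_of_lt hwz hz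
    have ssum := summable_cc (a := a) hq0 hq1 hwlt
    have e : FF a q (q ^ n * z) - 1 = ∑' m : ℕ, cc a q (m+1) * (q ^ n * z) ^ (m+1) := by
      rw [FF, Summable.tsum_eq_zero_add ssum]
      simp [cc_zero]
    rw [e]
    have hg : HasSum (fun m : ℕ => (Cbound a q * (q ^ n * |z|)) * |z| ^ m)
        ((Cbound a q * (q ^ n * |z|)) * (1 - |z|)⁻¹) :=
      (hasSum_geometric_of_lt_one (abs_nonneg z) hz).mul_left _
    have hb : ∀ m : ℕ, ‖cc a q (m+1) * (q ^ n * z) ^ (m+1)‖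
        ≤ (Cbound a q * (q ^ n * |z|)) * |z| ^ m := by
      intro m
      rw [norm_mul, norm_pow, Real.norm_eq_abs, Real.norm_eq_abs]
      have h1 : |cc a q (m+1)| ≤ Cbound a q := abs_cc_le hq0 hq1 (m+1)
      have h2 : |q ^ n * z| ^ (m+1) ≤ (q ^ n * |z|) * |z| ^ m := by
        have h3 : |q ^ n * z| ^ m ≤ |z| ^ m :=
          pow_le_pow_left₀ (abs_nonneg _) hwz m
        have h4 : |q ^ n * z| = q ^ n * |z| := by
          rw [abs_mul, abs_pow, abs_of_pos hq0]
        calc |q ^ n * z| ^ (m+1) = |q ^ n * z| * |q ^ n * z| ^ m := pow_succ' _ _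
          _ ≤ (q ^ n * |z|) * |z| ^ m := by
              rw [h4] at h3 ⊢
              exact mul_le_mul_of_nonneg_left h3 (mul_nonneg hqn0.le (abs_nonneg z))
      calc |cc a q (m+1)| * |q ^ n * z| ^ (m+1)
          ≤ Cbound a q * ((q ^ n * |z|) * |z| ^ m) := by
            apply mul_le_mul h1 h2 (by positivity) Cbound_pos.le
        _ = (Cbound a q * (q ^ n * |z|)) * |z| ^ m := by ring
    have := tsum_of_norm_bounded hg hb
    calc ‖∑' m : ℕ, cc a q (m+1) * (q ^ n * z) ^ (m+1)‖
        ≤ (Cbound a q * (q ^ n * |z|)) * (1 - |z|)⁻¹ := this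
      _ = (Cbound a q * (1 - |z|)⁻¹ * |z|) * q ^ n := by ring
  have hlim : Tendsto (fun n : ℕ => (Cbound a q * (1 - |z|)⁻¹ * |z|) * q ^ n)
      atTop (𝓝 0) := by
    rw [show (0:ℝ) = (Cbound a q * (1 - |z|)⁻¹ * |z|) * 0 by ring]
    exact (tendsto_pow_atTop_nhds_zero_of_lt_one hq0.le hq1).const_mul _
  have h0 : Tendsto (fun n : ℕ => FF a q (q ^ n * z) - 1) atTop (𝓝 0) :=
    squeeze_zero_norm bound hlim
  have := h0.add_const 1
  simpa using this

lemma qbinom (hq0 : 0 < q) (hq1 : q < 1) (hz : |z| < 1) (haz : a * z < 1) :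
    FF a q z * qPochInf z q = qPochInf (a * z) q := by
  have hz1 : z < 1 := (abs_lt.mp hz).2
  have t1 : Tendsto (fun n : ℕ => FF a q z * qPoch z q n) atTop
      (𝓝 (FF a q z * qPochInf z q)) := (tendsto_qPoch hq0 hq1 hz1).const_mul _
  have ta := tendsto_qPoch (x := a*z) hq0 hq1 haz
  have tb := FF_tendsto_one (a := a) hq0 hq1 hz
  have t2 : Tendsto (fun n : ℕ => qPoch (a*z) q n * FF a q (q ^ n * z)) atTop
      (𝓝 (qPochInf (a*z) q * 1)) := ta.mul tb
  have := tendsto_nhds_unique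
    (t1.congr (fun n => iterate_eq hq0 hq1 hz n)) t2
  simpa using this

lemma split_qPochInf (hq0 : 0 < q) (hq1 : q < 1) (k : ℕ) (x : ℝ)
    (hx : x * q ^ (-(k:ℤ)) < 1) (hx1 : x < 1) :
    qPochInf (x * q ^ (-(k:ℤ))) q = qPoch (x * q ^ (-(k:ℤ))) q k * qPochInf x q := by
  set y := x * q ^ (-(k:ℤ)) with hy
  have hterm : ∀ i : ℕ, 1 - y * q ^ (i+k) = 1 - x * q ^ i := by
    intro i
    have h1 : (q:ℝ) ^ (-(k:ℤ)) = (q^k)⁻¹ := by rw [zpow_neg, zpow_natCast]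
    have h2 : (q:ℝ)^k ≠ 0 := (pow_pos hq0 k).ne'
    rw [hy, h1, pow_add]
    field_simp
  have hs := summable_log (x := y) hq0 hq1 hx
  have hsplit := Summable.sum_add_tsum_nat_add k hs
  rw [qPochInf, (hasProd_one_sub hq0 hq1 hx).tprod_eq, ← hsplit, Real.exp_add, Real.exp_sum]
  congr 1
  · rw [qPoch]
    exact Finset.prod_congr rfl fun i _ => Real.exp_log (fact_pos hq0 hq1 hx i)
  · rw [qPochInf, (hasProd_one_sub hq0 hq1 hx1).tprod_eq]
    congr 1
    exact tsum_congr fun i => by rw [hterm i]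
end helpers

theorem qbinom_moment_aux (q mu nu : ℝ) (k : ℕ) (hq0 : 0 < q) (hq1 : q < 1)
    (hmu0 : 0 < mu) (hmu1 : mu < 1) (hnu : nu ≤ mu) (hk : 1 ≤ k) (hmuk : mu < q ^ k) :
    ∑' l : ℕ, q ^ (-((k : ℤ) * l)) * (mu ^ l * (qPoch (nu / mu) q l / qPoch q q l) *
        (qPochInf mu q / qPochInf nu q))
      = qPoch (nu * q ^ (-(k : ℤ))) q k / qPoch (mu * q ^ (-(k : ℤ))) q k := by
  have hqk : (0:ℝ) < q ^ k := pow_pos hq0 k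
  have hzq : (q:ℝ) ^ (-(k:ℤ)) = (q ^ k)⁻¹ := by rw [zpow_neg, zpow_natCast]
  have hw0 : (0:ℝ) < q ^ (-(k:ℤ)) := by rw [hzq]; positivity
  set a := nu / mu with ha
  set z := mu * q ^ (-(k:ℤ)) with hzdef
  have hz0 : 0 < z := mul_pos hmu0 hw0
  have hz1 : z < 1 := by
    have := mul_lt_mul_of_pos_right hmuk (inv_pos.mpr hqk)
    rw [mul_inv_cancel₀ hqk.ne'] at this
    rw [hzdef, hzq]; exact this
  have hzabs : |z| < 1 := by rw [abs_of_pos hz0]; exact hz1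
  have haz : a * z = nu * q ^ (-(k:ℤ)) := by
    rw [ha, hzdef]; field_simp
  have haz1 : a * z < 1 := by
    rw [haz]
    linarith [mul_le_mul_of_nonneg_right hnu hw0.le, hz1, hzdef]
  have hnu1 : nu < 1 := lt_of_le_of_lt hnu hmu1
  have hsummand : ∀ l : ℕ, q ^ (-((k:ℤ) * l)) * (mu ^ l * (qPoch (nu / mu) q l / qPoch q q l) *
        (qPochInf mu q / qPochInf nu q))
      = (cc a q l * z ^ l) * (qPochInf mu q / qPochInf nu q) := by
    intro l
    have hpow : q ^ (-((k:ℤ) * l)) * mu ^ l = z ^ l := by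
      rw [hzdef, mul_pow]
      have h2 : ((q : ℝ) ^ (-(k:ℤ))) ^ l = q ^ (-((k:ℤ) * l)) := by
        rw [← zpow_natCast (q ^ (-(k:ℤ))) l, ← zpow_mul]
        congr 1
        push_cast
        ring
      rw [h2]; ring
    rw [cc, ← ha]
    linear_combination (qPoch a q l / qPoch q q l * (qPochInf mu q / qPochInf nu q)) * hpow
  rw [tsum_congr hsummand, tsum_mul_right]
  have hFF : (∑' l : ℕ, cc a q l * z ^ l) = FF a q z := rfl
  rw [hFF]
  have hbin := qbinom (a := a) hq0 hq1 hzabs haz1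
  have hPz : 0 < qPochInf z q := qPochInf_pos hq0 hq1 hz1
  have hFFval : FF a q z = qPochInf (a*z) q / qPochInf z q := by
    rw [eq_div_iff hPz.ne']; exact hbin
  rw [hFFval, haz]
  have hmuz1 : mu * q ^ (-(k:ℤ)) < 1 := by rw [← hzdef]; exact hz1
  have hnuz1 : nu * q ^ (-(k:ℤ)) < 1 := by rw [← haz]; exact haz1
  have s1 := split_qPochInf hq0 hq1 k mu hmuz1 hmu1
  have s2 := split_qPochInf hq0 hq1 k nu hnuz1 hnu1
  rw [hzdef, s1, s2]
  have hPmu : 0 < qPochInf mu q := qPochInf_pos hq0 hq1 hmu1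
  have hPnu : 0 < qPochInf nu q := qPochInf_pos hq0 hq1 hnu1
  have hPk : 0 < qPoch (mu * q ^ (-(k:ℤ))) q k :=
    Finset.prod_pos fun i _ => fact_pos hq0 hq1 hmuz1 i
  rw [div_mul_div_comm,
    div_eq_div_iff (mul_pos (mul_pos hPk hPmu) hPnu).ne' hPk.ne']
  ring

/-- The k-th q-moment of one step of the first q-Hahn PushTASEP particle. -/
theorem stmt_3 (q mu nu : ℝ) (k : ℕ) (hq0 : 0 < q) (hq1 : q < 1)
    (hmu0 : 0 < mu) (hmu1 : mu < 1) (hnu : nu ≤ mu) (hk : 1 ≤ k) (hmuk : mu < q ^ k) :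
    ∑' l : ℕ, q ^ (-((k : ℤ) * l)) * phiInfW q mu nu l
      = qPoch (nu * q ^ (-(k : ℤ))) q k / qPoch (mu * q ^ (-(k : ℤ))) q k := by
  simp only [phiInfW]
  exact qbinom_moment_aux q mu nu k hq0 hq1 hmu0 hmu1 hnu hk hmuk
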